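/- Fix a real γ > 1. For integer N ≥ 2 let S_N = (s_0, …, s_{N−1}) be the degree-maximizing sequence with exponent γ, and let A_N = #{ i ∈ {0, …, N−1} : s_i = 1 } be the number of entries equal to 1. Then lim_{N→∞} A_N / N = 1/ζ(γ), where ζ is the Riemann zeta function; in particular the number of unit-degree nodes grows linearly in N. -/

import Mathlib

open Filter

/-- The generalized harmonic number `H_{a,b} = ∑_{t=1}^{a} t^{-b}`. -/
noncomputable def Hgen (a : ℕ) (b : ℝ) : ℝ := ∑ t ∈ Finset.Icc 1 a, (t : ℝ) ^ (-b)

/-- The degree-maximizing sequence with exponent `γ` on `N` nodes: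
`s_i = max { s ∈ {1,…,N-1} : N · ∑_{d=s}^{N-1} d^{-γ} ≥ (i+1) · H_{N-1,γ} }`. -/
noncomputable def seqS (N : ℕ) (γ : ℝ) (i : ℕ) : ℕ :=
  sSup {s : ℕ | 1 ≤ s ∧ s ≤ N - 1 ∧
    ((i : ℝ) + 1) * Hgen (N - 1) γ ≤ (N : ℝ) * ∑ d ∈ Finset.Icc s (N - 1), (d : ℝ) ^ (-γ)}

/-- The number of entries `s_i` (for `i ∈ {0,…,N-1}`) of the degree-maximizing sequence
that are equal to `1`. -/
noncomputable def Acount (N : ℕ) (γ : ℝ) : ℕ :=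
  {i : ℕ | i < N ∧ seqS N γ i = 1}.ncard

lemma Hgen_eq_range (a : ℕ) {γ : ℝ} (hγ : γ ≠ 0) :
    Hgen a γ = ∑ t ∈ Finset.range (a + 1), (t : ℝ) ^ (-γ) := by
  have h : Finset.range (a + 1) = insert 0 (Finset.Icc 1 a) := by
    ext x; simp [Nat.lt_succ_iff]; omega
  rw [Hgen, h, Finset.sum_insert (by simp)]
  rw [Nat.cast_zero, Real.zero_rpow (by simpa using hγ), zero_add]

lemma Hgen_gt_one {γ : ℝ} {a : ℕ} (ha : 2 ≤ a) : 1 < Hgen a γ := by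
  have hsub : (Finset.Icc 1 2 : Finset ℕ) ⊆ Finset.Icc 1 a := Finset.Icc_subset_Icc_right ha
  have h2 : (1 : ℝ) + (2 : ℝ) ^ (-γ) ≤ Hgen a γ := by
    have hle : ∑ t ∈ (Finset.Icc 1 2 : Finset ℕ), (t : ℝ) ^ (-γ) ≤ Hgen a γ :=
      Finset.sum_le_sum_of_subset_of_nonneg hsub (fun i _ _ => by positivity)
    have h12 : (Finset.Icc 1 2 : Finset ℕ) = ({1, 2} : Finset ℕ) := by decide
    rw [h12] at hle
    simpa [Finset.sum_insert, Finset.sum_singleton] using hle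
  have : (0 : ℝ) < (2 : ℝ) ^ (-γ) := Real.rpow_pos_of_pos (by norm_num) _
  linarith

/-- Characterization of when `seqS N γ i = 1`. -/
lemma seqS_eq_one_iff {N : ℕ} (hN : 3 ≤ N) {γ : ℝ} {i : ℕ} (hi : i < N) :
    seqS N γ i = 1 ↔ (N : ℝ) * (Hgen (N - 1) γ - 1) < ((i : ℝ) + 1) * Hgen (N - 1) γ := by
  set H := Hgen (N - 1) γ with hH
  set S := {s : ℕ | 1 ≤ s ∧ s ≤ N - 1 ∧
    ((i : ℝ) + 1) * H ≤ (N : ℝ) * ∑ d ∈ Finset.Icc s (N - 1), (d : ℝ) ^ (-γ)} with hS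
  have hH1 : 1 < H := Hgen_gt_one (by omega)
  have hT2 : ∑ d ∈ Finset.Icc 2 (N - 1), (d : ℝ) ^ (-γ) = H - 1 := by
    have h : Finset.Icc 1 (N - 1) = insert 1 (Finset.Icc 2 (N - 1)) := by
      ext x; simp; omega
    have : H = 1 + ∑ d ∈ Finset.Icc 2 (N - 1), (d : ℝ) ^ (-γ) := by
      rw [hH, Hgen, h, Finset.sum_insert (by simp)]
      norm_num
    linarith
  have h1S : 1 ∈ S := by
    refine ⟨le_refl 1, by omega, ?_⟩
    rw [← Hgen, ← hH]
    have : ((i : ℝ) + 1) ≤ (N : ℝ) := by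
      have : (i : ℝ) + 1 ≤ (N : ℝ) := by exact_mod_cast Nat.succ_le_of_lt hi
      exact this
    nlinarith
  have hbdd : BddAbove S := ⟨N, fun s hs => le_trans hs.2.1 (by omega)⟩
  -- antitonicity of the tail sums
  have hmono : ∀ s s' : ℕ, s' ≤ s →
      ∑ d ∈ Finset.Icc s (N - 1), (d : ℝ) ^ (-γ) ≤
      ∑ d ∈ Finset.Icc s' (N - 1), (d : ℝ) ^ (-γ) := by
    intro s s' hss
    apply Finset.sum_le_sum_of_subset_of_nonneg (Finset.Icc_subset_Icc_left hss)
    intro d _ _; positivity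
  constructor
  · intro h1
    by_contra hcon
    push_neg at hcon
    have h2S : 2 ∈ S := ⟨by norm_num, by omega, by rw [hT2]; exact hcon⟩
    have : 2 ≤ sSup S := le_csSup hbdd h2S
    rw [show sSup S = seqS N γ i from rfl, h1] at this
    omega
  · intro h
    have hle : ∀ s ∈ S, s ≤ 1 := by
      intro s hs
      by_contra hs1
      push_neg at hs1
      have h2s : 2 ≤ s := hs1
      have := hs.2.2
      have hts : ∑ d ∈ Finset.Icc s (N - 1), (d : ℝ) ^ (-γ) ≤ H - 1 := by
        rw [← hT2]; exact hmono s 2 h2s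
      have hN0 : (0 : ℝ) ≤ (N : ℝ) := Nat.cast_nonneg N
      nlinarith
    exact le_antisymm (csSup_le ⟨1, h1S⟩ hle) (le_csSup hbdd h1S)

/-- Count formula for `N ≥ 3`. -/
lemma acount_eq {N : ℕ} (hN : 3 ≤ N) (γ : ℝ) :
    Acount N γ = N - ⌊(N : ℝ) * (1 - (Hgen (N - 1) γ)⁻¹)⌋₊ := by
  set H := Hgen (N - 1) γ with hHdef
  have hH1 : 1 < H := Hgen_gt_one (by omega)
  have hHpos : (0 : ℝ) < H := by linarith
  set x := (N : ℝ) * (1 - H⁻¹) with hx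
  have hx0 : 0 ≤ x := by
    have : H⁻¹ ≤ 1 := by
      rw [inv_le_one_iff₀]; right; linarith
    have hN0 : (0 : ℝ) ≤ (N : ℝ) := Nat.cast_nonneg N
    nlinarith
  set m := ⌊x⌋₊ with hm
  have hkey : ∀ i : ℕ, i < N → (seqS N γ i = 1 ↔ m ≤ i) := by
    intro i hi
    rw [seqS_eq_one_iff hN hi, ← hHdef]
    have step1 : (N : ℝ) * (H - 1) < ((i : ℝ) + 1) * H ↔ x < (i : ℝ) + 1 := by
      rw [hx]
      constructor
      · intro h
        rw [show (N:ℝ) * (1 - H⁻¹) = (N : ℝ) * (H - 1) / H by field_simp]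
        rw [div_lt_iff₀ hHpos]; exact h
      · intro h
        rw [show (N:ℝ) * (1 - H⁻¹) = (N : ℝ) * (H - 1) / H by field_simp,
          div_lt_iff₀ hHpos] at h
        exact h
    rw [step1, show ((i : ℝ) + 1) = ((i + 1 : ℕ) : ℝ) by push_cast; ring,
      ← Nat.floor_lt hx0, ← hm]
    omega
  have hset : {i : ℕ | i < N ∧ seqS N γ i = 1} = ↑(Finset.Ico m N) := by
    ext i
    simp only [Set.mem_setOf_eq, Finset.coe_Ico, Set.mem_Ico]
    constructor
    · rintro ⟨h1, h2⟩; exact ⟨(hkey i h1).mp h2, h1⟩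
    · rintro ⟨h1, h2⟩; exact ⟨h2, (hkey i h2).mpr h1⟩
  rw [Acount, hset, Set.ncard_coe_finset, Nat.card_Ico]

lemma zeta_re_eq {γ : ℝ} (hγ : 1 < γ) :
    (riemannZeta γ).re = ∑' n : ℕ, (n : ℝ) ^ (-γ) := by
  have h : riemannZeta γ = ∑' n : ℕ, 1 / (n : ℂ) ^ (γ : ℂ) :=
    zeta_eq_tsum_one_div_nat_cpow (by simpa using hγ)
  have hterm : ∀ n : ℕ, 1 / (n : ℂ) ^ (γ : ℂ) = (((n : ℝ) ^ (-γ) : ℝ) : ℂ) := by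
    intro n
    rw [show ((n : ℂ)) = (((n : ℝ) : ℂ)) by push_cast; ring,
      ← Complex.ofReal_cpow (Nat.cast_nonneg n)]
    rw [Real.rpow_neg (Nat.cast_nonneg n)]
    push_cast
    ring
  rw [h, tsum_congr hterm, ← Complex.ofReal_tsum, Complex.ofReal_re]

/-- For `γ > 1`, `lim_{N→∞} A_N / N = 1/ζ(γ)`, where `ζ` is the Riemann zeta function;
in particular, the number of unit-degree nodes grows linearly in `N`. -/
theorem unit_degree_count_gamma_gt_one (γ : ℝ) (hγ : 1 < γ) :
    Tendsto (fun N : ℕ => (Acount N γ : ℝ) / N) atTop (nhds (1 / (riemannZeta γ).re)) := by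
  have hγ0 : γ ≠ 0 := by linarith
  set Z := (riemannZeta γ).re with hZdef
  have hsum : Summable (fun n : ℕ => (n : ℝ) ^ (-γ)) :=
    Real.summable_nat_rpow.mpr (by linarith)
  have hZ : Z = ∑' n : ℕ, (n : ℝ) ^ (-γ) := zeta_re_eq hγ
  have hZ1 : 1 ≤ Z := by
    rw [hZ]
    have := Summable.le_tsum hsum 1 (fun i _ => by positivity)
    simpa using this
  have hZ0 : Z ≠ 0 := by linarith
  -- H tends to Z
  have hHtend : Tendsto (fun N : ℕ => Hgen (N - 1) γ) atTop (nhds Z) := by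
    have h1 : Tendsto (fun n : ℕ => ∑ t ∈ Finset.range n, (t : ℝ) ^ (-γ)) atTop (nhds Z) := by
      rw [hZ]; exact hsum.hasSum.tendsto_sum_nat
    apply h1.congr'
    filter_upwards [eventually_ge_atTop 1] with N hN1
    rw [Hgen_eq_range _ hγ0, show N - 1 + 1 = N by omega]
  -- 1 - H⁻¹ tends to 1 - Z⁻¹
  have hsub : Tendsto (fun N : ℕ => 1 - (Hgen (N - 1) γ)⁻¹) atTop (nhds (1 - Z⁻¹)) :=
    tendsto_const_nhds.sub (hHtend.inv₀ hZ0)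
  -- floor facts, for N ≥ 3
  have hfacts : ∀ N : ℕ, 3 ≤ N →
      0 ≤ (N : ℝ) * (1 - (Hgen (N - 1) γ)⁻¹) ∧
      (N : ℝ) * (1 - (Hgen (N - 1) γ)⁻¹) ≤ N := by
    intro N hN
    have hH1 : 1 < Hgen (N - 1) γ := Hgen_gt_one (by omega)
    have hinv0 : 0 < (Hgen (N - 1) γ)⁻¹ := by positivity
    have hinv1 : (Hgen (N - 1) γ)⁻¹ ≤ 1 := by
      rw [inv_le_one_iff₀]; right; linarith
    have hN0 : (0 : ℝ) ≤ (N : ℝ) := Nat.cast_nonneg N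
    constructor
    · nlinarith
    · nlinarith
  -- m/N tends to 1 - Z⁻¹ by squeeze
  have hmN : Tendsto (fun N : ℕ => (⌊(N : ℝ) * (1 - (Hgen (N - 1) γ)⁻¹)⌋₊ : ℝ) / N)
      atTop (nhds (1 - Z⁻¹)) := by
    have hlow : Tendsto (fun N : ℕ => (1 - (Hgen (N - 1) γ)⁻¹) - 1 / N) atTop
        (nhds (1 - Z⁻¹)) := by
      have := hsub.sub tendsto_one_div_atTop_nhds_zero_nat
      simpa using this
    refine tendsto_of_tendsto_of_tendsto_of_le_of_le' hlow hsub ?_ ?_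
    · filter_upwards [eventually_ge_atTop 3] with N hN
      set x := (N : ℝ) * (1 - (Hgen (N - 1) γ)⁻¹) with hxd
      have hNpos : (0 : ℝ) < N := by
        have : (3 : ℝ) ≤ (N : ℝ) := by exact_mod_cast hN
        linarith
      have hfl : x - 1 ≤ (⌊x⌋₊ : ℝ) := by
        have := Nat.lt_floor_add_one x
        linarith
      calc (1 - (Hgen (N - 1) γ)⁻¹) - 1 / N = (x - 1) / N := by
            rw [hxd]; field_simp
        _ ≤ (⌊x⌋₊ : ℝ) / N := by gcongr
    · filter_upwards [eventually_ge_atTop 3] with N hN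
      set x := (N : ℝ) * (1 - (Hgen (N - 1) γ)⁻¹) with hxd
      have hNpos : (0 : ℝ) < N := by
        have : (3 : ℝ) ≤ (N : ℝ) := by exact_mod_cast hN
        linarith
      have hx0 : 0 ≤ x := (hfacts N hN).1
      calc (⌊x⌋₊ : ℝ) / N ≤ x / N := by gcongr; exact Nat.floor_le hx0
        _ = 1 - (Hgen (N - 1) γ)⁻¹ := by
            rw [hxd, mul_div_cancel_left₀ _ hNpos.ne']
  -- conclude
  have hfinal : Tendsto (fun N : ℕ =>
      1 - (⌊(N : ℝ) * (1 - (Hgen (N - 1) γ)⁻¹)⌋₊ : ℝ) / N) atTop (nhds (1 / Z)) := by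
    have := (tendsto_const_nhds (x := (1 : ℝ))).sub hmN
    simpa [one_div] using this
  apply hfinal.congr'
  filter_upwards [eventually_ge_atTop 3] with N hN
  have hNpos : (0 : ℝ) < N := by
    have : (3 : ℝ) ≤ (N : ℝ) := by exact_mod_cast hN
    linarith
  set x := (N : ℝ) * (1 - (Hgen (N - 1) γ)⁻¹) with hxd
  have hx0 : 0 ≤ x := (hfacts N hN).1
  have hxN : x ≤ N := (hfacts N hN).2
  have hmle : ⌊x⌋₊ ≤ N := by
    have h1 : (⌊x⌋₊ : ℝ) ≤ (N : ℝ) := le_trans (Nat.floor_le hx0) hxN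
    exact_mod_cast h1
  rw [acount_eq hN γ, ← hxd, Nat.cast_sub hmle, sub_div, div_self hNpos.ne']
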